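/- Let H be a complex Hilbert space, A : H →L[ℂ] H a continuous linear self-adjoint operator, and ψ ∈ H a unit vector. Then, as t → 0, the quantity −ln |⟨ψ, exp(−itA)ψ⟩|² equals t²·(⟨ψ, A²ψ⟩ − ⟨ψ, Aψ⟩²) + O(t³); i.e. the function t ↦ −Real.log |⟨ψ, exp(−itA)ψ⟩|² − t²·(re⟨ψ, A(Aψ)⟩ − (re⟨ψ, Aψ⟩)²) is O(t³) in a neighbourhood of t = 0. (This is the leading-order growth of the geometric entanglement of an initially separable state under unitary evolution generated by A.) -/

import Mathlib

open scoped InnerProductSpace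
open Asymptotics

lemma pow_isBigO_pow_nhds_zero {n m : ℕ} (hm : n ≤ m) :
    (fun t : ℝ => t ^ m) =O[nhds 0] (fun t : ℝ => t ^ n) := by
  rw [isBigO_iff]
  refine ⟨1, ?_⟩
  filter_upwards [Metric.ball_mem_nhds (0:ℝ) one_pos] with t ht
  simp only [Real.ball_eq_Ioo, Set.mem_Ioo] at ht
  have habs : |t| ≤ 1 := by rw [abs_le]; constructor <;> linarith [ht.1, ht.2]
  rw [one_mul, Real.norm_eq_abs, Real.norm_eq_abs, abs_pow, abs_pow]
  exact pow_le_pow_of_le_one (abs_nonneg t) habs hm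

lemma log_sub_isBigO {x : ℝ → ℝ} {l : Filter ℝ} (hx : Filter.Tendsto x l (nhds 0)) :
    (fun t => Real.log (1 + x t) - x t) =O[l] (fun t => (x t) ^ 2) := by
  rw [isBigO_iff]
  refine ⟨2, ?_⟩
  have h : ∀ᶠ t in l, |x t| ≤ 1/2 := by
    have := hx.eventually (eventually_abs_sub_lt 0 (by norm_num : (0:ℝ) < 1/2))
    filter_upwards [this] with t ht
    simpa using ht.le
  filter_upwards [h] with t ht
  have h1 : |x t| < 1 := lt_of_le_of_lt ht (by norm_num)
  have := Real.abs_log_sub_add_sum_range_le (x := -(x t)) (by simpa using h1) 1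
  simp only [Finset.sum_range_one, pow_one] at this
  rw [sub_neg_eq_add] at this
  norm_num at this
  rw [(by ring : -(x t) + Real.log (1 + x t) = Real.log (1 + x t) - x t)] at this
  have hden : (1:ℝ)/2 ≤ 1 - |x t| := by linarith
  have h2 : x t ^ 2 / (1 - |x t|) ≤ 2 * (x t)^2 := by
    calc x t ^ 2 / (1 - |x t|) ≤ x t ^2 / (1/2) :=
          div_le_div_of_nonneg_left (by positivity) (by norm_num) hden
      _ = 2 * (x t)^2 := by ring
  calc ‖Real.log (1 + x t) - x t‖ = |Real.log (1 + x t) - x t| := rfl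
    _ ≤ x t ^ 2 / (1 - |x t|) := this
    _ ≤ 2 * (x t)^2 := h2
    _ = 2 * ‖(x t)^2‖ := by rw [Real.norm_eq_abs, abs_pow, sq_abs]

theorem geometric_entanglement_isBigO
    {H : Type*} [NormedAddCommGroup H] [InnerProductSpace ℂ H] [CompleteSpace H]
    (A : H →L[ℂ] H) (hA : IsSelfAdjoint A) (ψ : H) (hψ : ‖ψ‖ = 1) :
    (fun t : ℝ =>
        (-Real.log (‖⟪ψ, (NormedSpace.exp (((-Complex.I) * (t : ℂ)) • A)) ψ⟫_ℂ‖ ^ 2))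
          - t ^ 2 * ((⟪ψ, A (A ψ)⟫_ℂ).re - ((⟪ψ, A ψ⟫_ℂ).re) ^ 2))
      =O[nhds 0] (fun t : ℝ => t ^ 3) := by
  set r₁ : ℝ := (⟪ψ, A ψ⟫_ℂ).re with hr₁
  set r₂ : ℝ := (⟪ψ, A (A ψ)⟫_ℂ).re with hr₂
  set v : ℝ := r₂ - r₁ ^ 2 with hv
  -- symmetry of A
  have hsym : ∀ x y : H, ⟪A x, y⟫_ℂ = ⟪x, A y⟫_ℂ := by
    intro x y
    conv_lhs => rw [← hA.adjoint_eq]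
    exact ContinuousLinearMap.adjoint_inner_left A y x
  have ha1 : ⟪ψ, A ψ⟫_ℂ = (r₁ : ℂ) := by
    have : (starRingEnd ℂ) ⟪ψ, A ψ⟫_ℂ = ⟪ψ, A ψ⟫_ℂ := by
      rw [inner_conj_symm, hsym]
    exact (Complex.conj_eq_iff_re.mp this).symm
  have ha2 : ⟪ψ, A (A ψ)⟫_ℂ = (r₂ : ℂ) := by
    have : (starRingEnd ℂ) ⟪ψ, A (A ψ)⟫_ℂ = ⟪ψ, A (A ψ)⟫_ℂ := by
      rw [inner_conj_symm, hsym, ← hsym ψ (A ψ), hsym]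
    exact (Complex.conj_eq_iff_re.mp this).symm
  set B : ℝ → (H →L[ℂ] H) := fun t => ((-Complex.I) * (t:ℂ)) • A with hB
  set f : ℝ → ℂ := fun t => ⟪ψ, (NormedSpace.exp (B t)) ψ⟫_ℂ with hf
  set c : ℝ → ℂ := fun t => 1 - Complex.I*t*r₁ - t^2*r₂/2 with hc
  -- exp partial sum expansion
  have hpartial : ∀ y : H →L[ℂ] H,
      (NormedSpace.expSeries ℂ (H →L[ℂ] H)).partialSum 3 y = 1 + y + (2:ℂ)⁻¹ • (y*y) := by
    intro y
    simp [FormalMultilinearSeries.partialSum, Finset.sum_range_succ,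
      NormedSpace.expSeries_apply_eq, pow_succ]
  have hexp : (fun y : H →L[ℂ] H =>
      NormedSpace.exp y - (NormedSpace.expSeries ℂ (H →L[ℂ] H)).partialSum 3 y)
      =O[nhds 0] (fun y : H →L[ℂ] H => ‖y‖^3) := by
    simpa using
      (NormedSpace.exp_hasFPowerSeriesAt_zero (𝕂 := ℂ) (𝔸 := H →L[ℂ] H)).isBigO_sub_partialSum_pow 3
  have hBtend : Filter.Tendsto B (nhds 0) (nhds 0) := by
    have hcont : Continuous B := by
      refine Continuous.smul (?_ : Continuous fun t : ℝ => (-Complex.I) * (t:ℂ)) continuous_const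
      exact (continuous_const.mul Complex.continuous_ofReal)
    have h0 : B 0 = 0 := by simp [hB]
    simpa [h0] using hcont.tendsto 0
  have hnorm : (fun t : ℝ => ‖B t‖^3) =O[nhds 0] (fun t : ℝ => t^3) := by
    rw [isBigO_iff]
    refine ⟨‖A‖^3, Filter.Eventually.of_forall fun t => ?_⟩
    have : ‖B t‖ = |t| * ‖A‖ := by
      rw [hB]; simp [norm_smul, Complex.norm_def]
    refine le_of_eq ?_
    rw [Real.norm_eq_abs, abs_of_nonneg (by positivity), this, Real.norm_eq_abs, abs_pow, mul_pow]
    ring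
  have hE : (fun t => NormedSpace.exp (B t)
      - (NormedSpace.expSeries ℂ (H →L[ℂ] H)).partialSum 3 (B t)) =O[nhds 0]
      (fun t : ℝ => t^3) :=
    (hexp.comp_tendsto hBtend).trans hnorm
  -- inner product of the partial sum
  have hPinner : ∀ t : ℝ,
      ⟪ψ, ((NormedSpace.expSeries ℂ (H →L[ℂ] H)).partialSum 3 (B t)) ψ⟫_ℂ = c t := by
    intro t
    rw [hpartial]
    have h2' : (B t * B t) ψ = (-(t:ℂ)^2) • (A (A ψ)) := by
      have hBmul : (B t * B t) = (-(t:ℂ)^2) • (A * A) := by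
        rw [hB]
        dsimp only
        rw [smul_mul_smul_comm]
        congr 1
        have h3 : (-Complex.I * t) * (-Complex.I * t) = (Complex.I^2) * t^2 := by ring
        rw [h3, Complex.I_sq]; ring
      rw [hBmul]; rfl
    simp only [ContinuousLinearMap.add_apply, ContinuousLinearMap.one_apply,
      ContinuousLinearMap.smul_apply]
    rw [h2', inner_add_right, inner_add_right, inner_smul_right]
    have hBapp : (B t) ψ = ((-Complex.I * t):ℂ) • (A ψ) := by rw [hB]; rfl
    rw [hBapp, inner_smul_right, inner_smul_right, inner_self_eq_norm_sq_to_K, hψ, ha1, ha2, hc]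
    push_cast
    ring
  have hL : ∀ T : H →L[ℂ] H, ‖(⟪ψ, T ψ⟫_ℂ)‖ ≤ ‖T‖ := by
    intro T
    calc ‖(⟪ψ, T ψ⟫_ℂ)‖ ≤ ‖ψ‖ * ‖T ψ‖ := norm_inner_le_norm _ _
      _ ≤ 1 * (‖T‖ * 1) := by
          rw [hψ]
          exact mul_le_mul_of_nonneg_left (by simpa [hψ] using T.le_opNorm ψ) zero_le_one
      _ = ‖T‖ := by ring
  have he : (fun t => f t - c t) =O[nhds 0] (fun t : ℝ => t^3) := by
    have step : (fun t => f t - c t) =O[nhds 0] (fun t => NormedSpace.exp (B t)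
        - (NormedSpace.expSeries ℂ (H →L[ℂ] H)).partialSum 3 (B t)) := by
      rw [isBigO_iff]
      refine ⟨1, Filter.Eventually.of_forall fun t => ?_⟩
      have hid : f t - c t = ⟪ψ, (NormedSpace.exp (B t)
          - (NormedSpace.expSeries ℂ (H →L[ℂ] H)).partialSum 3 (B t)) ψ⟫_ℂ := by
        rw [ContinuousLinearMap.sub_apply, inner_sub_right, hPinner, hf]
      rw [hid, one_mul]
      exact hL _
    exact step.trans hE
  -- conjugates
  have hcconj : ∀ t : ℝ, (starRingEnd ℂ) (c t) = 1 + Complex.I*t*r₁ - (t:ℂ)^2*r₂/2 := by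
    intro t
    rw [hc]
    simp only [map_sub, map_add, map_mul, map_one, map_div₀, map_pow, map_ofNat,
      Complex.conj_ofReal, Complex.conj_I]
    ring
  have heconj : (fun t => (starRingEnd ℂ) (f t) - (starRingEnd ℂ) (c t)) =O[nhds 0]
      (fun t : ℝ => t^3) := by
    refine IsBigO.trans ?_ he
    rw [isBigO_iff]
    refine ⟨1, Filter.Eventually.of_forall fun t => ?_⟩
    rw [one_mul, ← map_sub, RCLike.norm_conj]
  have hccont : Continuous c := by
    rw [hc]
    have h1 : Continuous fun t : ℝ => Complex.I * (t:ℂ) * (r₁:ℂ) :=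
      (continuous_const.mul Complex.continuous_ofReal).mul continuous_const
    have h2 : Continuous fun t : ℝ => ((t:ℂ))^2 * (r₂:ℂ) / 2 :=
      ((Complex.continuous_ofReal.pow 2).mul continuous_const).div_const 2
    exact (continuous_const.sub h1).sub h2
  have hc1 : (fun t : ℝ => c t) =O[nhds 0] (fun _ : ℝ => (1:ℝ)) :=
    (hccont.tendsto 0).isBigO_one ℝ
  have hcconj1 : (fun t : ℝ => (starRingEnd ℂ) (c t)) =O[nhds 0] (fun _ : ℝ => (1:ℝ)) := by
    refine IsBigO.trans ?_ hc1
    rw [isBigO_iff]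
    exact ⟨1, Filter.Eventually.of_forall fun t => by rw [one_mul, RCLike.norm_conj]⟩
  have ht3small : (fun t : ℝ => t^3) =O[nhds 0] (fun _ : ℝ => (1:ℝ)) :=
    (((continuous_pow 3).tendsto' (0:ℝ) 0 (by norm_num))).isBigO_one ℝ
  have hfconj1 : (fun t : ℝ => (starRingEnd ℂ) (f t)) =O[nhds 0] (fun _ : ℝ => (1:ℝ)) := by
    have h2 := heconj.trans ht3small
    have := hcconj1.add h2
    refine this.congr_left fun t => by ring
  -- g and R
  set g : ℝ → ℝ := fun t => ‖f t‖^2 with hg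
  have hgC : ∀ t, (g t : ℂ) = f t * (starRingEnd ℂ) (f t) := by
    intro t
    rw [hg]
    dsimp only
    rw [Complex.sq_norm, Complex.mul_conj]
  set R : ℝ → ℝ := fun t => g t - (1 - t^2*v) with hRdef
  have hccId : ∀ t : ℝ, c t * (starRingEnd ℂ) (c t) - (1 - (t:ℂ)^2*(v:ℝ)) =
      ((t^4*(r₂^2/4) : ℝ) : ℂ) := by
    intro t
    rw [hcconj, hc, hv]
    dsimp only
    push_cast
    linear_combination (-(t:ℂ)^2*(r₁:ℂ)^2) * Complex.I_sq
  have hterm1 : (fun t : ℝ => ((t^4*(r₂^2/4) : ℝ) : ℂ)) =O[nhds 0] (fun t : ℝ => t^3) := by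
    refine IsBigO.trans ?_ (pow_isBigO_pow_nhds_zero (show 3 ≤ 4 by norm_num))
    rw [isBigO_iff]
    refine ⟨r₂^2/4, Filter.Eventually.of_forall fun t => ?_⟩
    rw [Complex.norm_real, Real.norm_eq_abs, Real.norm_eq_abs, abs_mul,
      abs_of_nonneg (show (0:ℝ) ≤ r₂^2/4 by positivity), mul_comm]
  have hterm2 : (fun t : ℝ => c t * ((starRingEnd ℂ) (f t) - (starRingEnd ℂ) (c t)))
      =O[nhds 0] (fun t : ℝ => t^3) := by
    have := hc1.mul heconj
    exact this.congr_right fun t => one_mul _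
  have hterm3 : (fun t : ℝ => (f t - c t) * (starRingEnd ℂ) (f t))
      =O[nhds 0] (fun t : ℝ => t^3) := by
    have := he.mul hfconj1
    exact this.congr_right fun t => mul_one _
  have hRC : (fun t : ℝ => (g t : ℂ) - (1 - (t:ℂ)^2*(v:ℝ))) =O[nhds 0] (fun t : ℝ => t^3) := by
    have hsplit : ∀ t : ℝ, (g t : ℂ) - (1 - (t:ℂ)^2*(v:ℝ)) =
        ((t^4*(r₂^2/4) : ℝ) : ℂ) + c t * ((starRingEnd ℂ) (f t) - (starRingEnd ℂ) (c t))
          + (f t - c t) * (starRingEnd ℂ) (f t) := by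
      intro t
      rw [hgC t, ← hccId t]
      ring
    exact ((hterm1.add hterm2).add hterm3).congr_left fun t => (hsplit t).symm
  have hRO : R =O[nhds 0] (fun t : ℝ => t^3) := by
    refine IsBigO.trans ?_ hRC
    rw [isBigO_iff]
    refine ⟨1, Filter.Eventually.of_forall fun t => ?_⟩
    rw [one_mul]
    have hcast : ((R t : ℝ) : ℂ) = (g t : ℂ) - (1 - (t:ℂ)^2*(v:ℝ)) := by
      rw [hRdef]; push_cast; ring
    rw [← hcast, Complex.norm_real]
  -- x = g - 1
  set x : ℝ → ℝ := fun t => g t - 1 with hxdef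
  have hx_eq : ∀ t, x t = -(t^2*v) + R t := by
    intro t; rw [hxdef, hRdef]; dsimp only; ring
  have hxO2 : x =O[nhds 0] (fun t : ℝ => t^2) := by
    have h1 : (fun t : ℝ => -(t^2*v)) =O[nhds 0] (fun t : ℝ => t^2) := by
      rw [isBigO_iff]
      refine ⟨|v|, Filter.Eventually.of_forall fun t => ?_⟩
      rw [norm_neg, Real.norm_eq_abs, Real.norm_eq_abs, abs_mul]
      ring_nf
      exact le_refl _
    have h2 : R =O[nhds 0] (fun t : ℝ => t^2) :=
      hRO.trans (pow_isBigO_pow_nhds_zero (show 2 ≤ 3 by norm_num))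
    exact (h1.add h2).congr_left fun t => (hx_eq t).symm
  have hx0 : Filter.Tendsto x (nhds 0) (nhds 0) :=
    hxO2.trans_tendsto ((continuous_pow 2).tendsto' (0:ℝ) 0 (by norm_num))
  have hx2O : (fun t => x t ^ 2) =O[nhds 0] (fun t : ℝ => t^3) := by
    have hmul := hxO2.mul hxO2
    have h1 : (fun t => x t * x t) =O[nhds 0] (fun t : ℝ => t^4) :=
      hmul.congr_right fun t => by ring
    have h2 := h1.trans (pow_isBigO_pow_nhds_zero (show 3 ≤ 4 by norm_num))
    exact h2.congr_left fun t => by ring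
  have hlog3 : (fun t => Real.log (1 + x t) - x t) =O[nhds 0] (fun t : ℝ => t^3) :=
    (log_sub_isBigO hx0).trans hx2O
  have hfinal : (fun t : ℝ => (-(Real.log (g t))) - t^2*v) =O[nhds 0] (fun t : ℝ => t^3) := by
    have hid : ∀ t : ℝ, (-(Real.log (g t))) - t^2*v =
        -((Real.log (1 + x t) - x t)) - R t := by
      intro t
      have h1 : (1 : ℝ) + x t = g t := by rw [hxdef]; dsimp only; ring
      rw [h1, hRdef, hxdef]
      dsimp only
      ring
    exact ((hlog3.neg_left).sub hRO).congr_left fun t => (hid t).symm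
  exact hfinal
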